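/- Let C be an n×n Cauchy matrix over a field K with data (x_1,...,x_n; x̃_1,...,x̃_n), i.e. C_{ij} = 1/(x_i - x̃_j) where x_1,...,x_n, x̃_1,...,x̃_n are mutually distinct scalars in K. Then for each i, the i-th column sum of C^{-1} equals (∏_k (x_i - x̃_k)) / (∏_{k ≠ i} (x_i - x_k)). -/

import Mathlib

open Polynomial Finset

section aux
variable {K : Type*} [Field K] {n : ℕ}

/-- monic product over erase -/
lemma aux_monic (z : Fin n → K) (i : Fin n) :
    ((Finset.univ.erase i).prod fun k => (X - C (z k)) : K[X]).Monic :=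
  monic_prod_of_monic _ _ fun k _ => monic_X_sub_C _

lemma aux_natDegree (z : Fin n → K) (i : Fin n) :
    ((Finset.univ.erase i).prod fun k => (X - C (z k)) : K[X]).natDegree = n - 1 := by
  rw [natDegree_prod_of_monic _ _ fun k _ => monic_X_sub_C _]
  simp [natDegree_X_sub_C, Finset.card_erase_of_mem]

lemma aux_coeff (hn : 0 < n) (z : Fin n → K) (i : Fin n) :
    ((Finset.univ.erase i).prod fun k => (X - C (z k)) : K[X]).coeff (n - 1) = 1 := by
  have h := aux_monic z i
  have := aux_natDegree z i
  rw [← this]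
  exact h.coeff_natDegree

/-- evaluation of the erase-product -/
lemma aux_eval (z : Fin n → K) (i : Fin n) (t : K) :
    ((Finset.univ.erase i).prod fun k => (X - C (z k)) : K[X]).eval t =
      (Finset.univ.erase i).prod fun k => (t - z k) := by
  simp [eval_prod]

/-- Key identity -/
lemma key_identity (hn : 0 < n) (x y : Fin n → K) (hx : Function.Injective x)
    (j : Fin n) :
    ∑ i, ((Finset.univ.erase j).prod fun k => (x i - y k)) /
        ((Finset.univ.erase i).prod fun k => (x i - x k)) = 1 := by
  classical
  set c : Fin n → K := fun i =>
    ((Finset.univ.erase j).prod fun k => (x i - y k)) /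
        ((Finset.univ.erase i).prod fun k => (x i - x k)) with hc
  have hxd : ∀ i : Fin n, ((Finset.univ.erase i).prod fun k => (x i - x k)) ≠ 0 := by
    intro i
    refine Finset.prod_ne_zero_iff.2 fun k hk => sub_ne_zero.2 fun h => ?_
    exact (Finset.mem_erase.1 hk).1 (hx h).symm
  set G : K[X] :=
    (∑ i, C (c i) * (Finset.univ.erase i).prod fun k => (X - C (x k))) -
      (Finset.univ.erase j).prod fun k => (X - C (y k)) with hG
  have hdeg : G.natDegree < n := by
    have h1 : G.natDegree ≤ n - 1 := by
      apply le_trans (natDegree_sub_le _ _)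
      rw [max_le_iff]
      constructor
      · apply Polynomial.natDegree_sum_le_of_forall_le
        intro i _
        apply le_trans (natDegree_mul_le)
        simp [aux_natDegree]
      · rw [aux_natDegree]
    omega
  have hzero : G = 0 := by
    apply Polynomial.eq_zero_of_natDegree_lt_card_of_eval_eq_zero G hx _ (by simpa using hdeg)
    intro m
    rw [hG]
    simp only [eval_sub, eval_finset_sum, eval_mul, eval_C, aux_eval]
    rw [Finset.sum_eq_single m]
    · rw [hc]
      simp only []
      rw [div_mul_cancel₀ _ (hxd m), sub_self]
    · intro i _ him
      have : ((Finset.univ.erase i).prod fun k => (x m - x k)) = 0 := by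
        apply Finset.prod_eq_zero (i := m) (by simp [Ne.symm him]) (by simp)
      simp [this]
    · simp
  have hcoeff : G.coeff (n - 1) = 0 := by rw [hzero]; simp
  rw [hG] at hcoeff
  simp only [coeff_sub, finset_sum_coeff, coeff_C_mul, aux_coeff hn] at hcoeff
  simp only [mul_one] at hcoeff
  rw [sub_eq_zero] at hcoeff
  exact hcoeff

/-- Invertibility -/
lemma cauchy_det_ne_zero (hn : 0 < n) (x y : Fin n → K)
    (hx : Function.Injective x) (hy : Function.Injective y)
    (hxy : ∀ i j, x i ≠ y j)
    (Cm : Matrix (Fin n) (Fin n) K) (hC : ∀ i j, Cm i j = (x i - y j)⁻¹) :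
    IsUnit Cm.det := by
  classical
  rw [isUnit_iff_ne_zero]
  intro hdet
  obtain ⟨w, hw0, hw⟩ := (Matrix.exists_mulVec_eq_zero_iff).2 hdet
  set P : K[X] := ∑ jj, C (w jj) * (Finset.univ.erase jj).prod fun k => (X - C (y k)) with hP
  have hPdeg : P.natDegree < n := by
    have : P.natDegree ≤ n - 1 := by
      apply Polynomial.natDegree_sum_le_of_forall_le
      intro i _
      apply le_trans (natDegree_mul_le)
      simp [aux_natDegree]
    omega
  have hPzero : P = 0 := by
    apply Polynomial.eq_zero_of_natDegree_lt_card_of_eval_eq_zero P hx _ (by simpa using hPdeg)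
    intro i
    have h0 : ∑ jj, (x i - y jj)⁻¹ * w jj = 0 := by
      have := congrFun hw i
      simpa [Matrix.mulVec, dotProduct, hC] using this
    rw [hP]
    simp only [eval_finset_sum, eval_mul, eval_C, aux_eval]
    have : ∀ jj : Fin n, w jj * ((Finset.univ.erase jj).prod fun k => (x i - y k)) =
        ((x i - y jj)⁻¹ * w jj) * ∏ k, (x i - y k) := by
      intro jj
      have hne : x i - y jj ≠ 0 := sub_ne_zero.2 (hxy i jj)
      rw [← Finset.prod_erase_mul (a := jj) _ _ (Finset.mem_univ jj)]
      field_simp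
    rw [Finset.sum_congr rfl fun jj _ => this jj, ← Finset.sum_mul, h0, zero_mul]
  apply hw0
  funext jj
  have := congrArg (Polynomial.eval (y jj)) hPzero
  rw [hP] at this
  simp only [eval_finset_sum, eval_mul, eval_C, aux_eval, eval_zero] at this
  rw [Finset.sum_eq_single jj] at this
  · have hne : ((Finset.univ.erase jj).prod fun k => (y jj - y k)) ≠ 0 := by
      refine Finset.prod_ne_zero_iff.2 fun k hk => sub_ne_zero.2 fun h => ?_
      exact (Finset.mem_erase.1 hk).1 (hy h).symm
    have := mul_eq_zero.1 this
    simpa [hne] using this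
  · intro i _ hij
    have : ((Finset.univ.erase i).prod fun k => (y jj - y k)) = 0 :=
      Finset.prod_eq_zero (i := jj) (by simp [Ne.symm hij]) (by simp)
    simp [this]
  · simp

end aux

theorem stmt2 {K : Type*} [Field K] {n : ℕ} (hn : 0 < n)
    (x y : Fin n → K) (hx : Function.Injective x) (hy : Function.Injective y)
    (hxy : ∀ i j, x i ≠ y j)
    (C : Matrix (Fin n) (Fin n) K) (hC : ∀ i j, C i j = (x i - y j)⁻¹) :
    ∀ i, ∑ j, C⁻¹ j i = (∏ k, (x i - y k)) / (∏ k ∈ Finset.univ \ {i}, (x i - x k)) := by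
  classical
  set v : Fin n → K := fun i =>
    (∏ k, (x i - y k)) / (∏ k ∈ Finset.univ \ {i}, (x i - x k)) with hv
  have hdet := cauchy_det_ne_zero hn x y hx hy hxy C hC
  have hvC : Matrix.vecMul v C = fun _ => (1 : K) := by
    funext j
    simp only [Matrix.vecMul, dotProduct]
    have := key_identity (y := y) hn x hx j
    rw [← this]
    apply Finset.sum_congr rfl
    intro i _
    rw [hC]
    have hne : x i - y j ≠ 0 := sub_ne_zero.2 (hxy i j)
    simp only [hv, ← Finset.erase_eq]
    rw [← Finset.prod_erase_mul (a := j) _ _ (Finset.mem_univ j)]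
    field_simp
  intro i
  have : Matrix.vecMul (fun _ => (1:K)) C⁻¹ = v := by
    rw [← hvC, Matrix.vecMul_vecMul, Matrix.mul_nonsing_inv _ hdet, Matrix.vecMul_one]
  calc ∑ j, C⁻¹ j i = Matrix.vecMul (fun _ => (1:K)) C⁻¹ i := by
        simp [Matrix.vecMul, dotProduct]
    _ = v i := by rw [this]
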